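/- arXiv:1203.3341 — 2 statements merged into one kernel-verified Lean document; each statement's English description precedes it below -/
import Mathlib

section
/- Let E be a finite-dimensional real normed vector space, T > 0, g : ℝ → E Bochner integrable on the interval [0, T], v : ℝ → ℝ a measurable function with v t ∈ [0, 1] for all t, and ε > 0. Then there exists a measurable function w : ℝ → ℝ with w t ∈ {0, 1} for all t such that for every t ∈ [0, T], ‖∫_0^t (v s − w s) • g s ds‖ ≤ ε. -/
open MeasureTheory

/-- Chattering lemma: a relaxed mode control `v` with values in `[0,1]` can be
approximated by a bang-bang control `w` with values in `{0,1}` so that the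
running integrals of the weighted difference are uniformly small. -/
theorem stmt7 {E : Type*} [NormedAddCommGroup E] [NormedSpace ℝ E]
    [FiniteDimensional ℝ E]
    (T : ℝ) (hT : 0 < T) (g : ℝ → E) (hg : IntegrableOn g (Set.Icc 0 T))
    (v : ℝ → ℝ) (hvm : Measurable v) (hv : ∀ t, v t ∈ Set.Icc (0 : ℝ) 1)
    (ε : ℝ) (hε : 0 < ε) :
    ∃ w : ℝ → ℝ, Measurable w ∧ (∀ t, w t ∈ ({0, 1} : Set ℝ)) ∧
      ∀ t ∈ Set.Icc (0 : ℝ) T, ‖∫ s in (0 : ℝ)..t, (v s - w s) • g s‖ ≤ ε := by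
  classical
  -- extend g by zero outside [0,T]
  set g₁ : ℝ → E := (Set.Icc (0:ℝ) T).indicator g with hg1def
  have hg₁ : Integrable g₁ := (integrable_indicator_iff measurableSet_Icc).mpr hg
  -- continuous compactly supported approximation
  obtain ⟨h, hhsupp, hhdist, hhcont, hhint⟩ :=
    hg₁.exists_hasCompactSupport_integral_sub_le (ε := ε/4) (by linarith)
  -- bound on h
  obtain ⟨M, hM⟩ := hhsupp.exists_bound_of_continuous hhcont
  have hM0 : 0 ≤ M := le_trans (norm_nonneg _) (hM 0)
  -- uniform continuity of h
  have huc : UniformContinuous h :=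
    hhcont.uniformContinuous_of_tendsto_cocompact hhsupp.is_zero_at_infty
  set η : ℝ := ε / (4 * (T + 1)) with hηdef
  have hη0 : 0 < η := by
    apply div_pos hε; nlinarith
  obtain ⟨δ, hδ0, hδ⟩ := Metric.uniformContinuous_iff.mp huc η hη0
  -- choose the number of subintervals
  obtain ⟨n, hn⟩ := exists_nat_gt (max (T/δ) (4*(M+1)*T/ε))
  have hnT : T/δ < (n:ℝ) := lt_of_le_of_lt (le_max_left _ _) hn
  have hnM : 4*(M+1)*T/ε < (n:ℝ) := lt_of_le_of_lt (le_max_right _ _) hn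
  have hn0 : 0 < (n:ℝ) := lt_trans (div_pos hT hδ0) hnT
  set c : ℝ := T / n with hcdef
  have hc : 0 < c := div_pos hT hn0
  have hcδ : c < δ := by
    rw [hcdef, div_lt_iff₀ hn0]
    rw [div_lt_iff₀ hδ0] at hnT
    linarith
  have hcM : M * c ≤ ε/4 := by
    rw [div_lt_iff₀ hε] at hnM
    rw [hcdef, ← mul_div_assoc, div_le_div_iff₀ hn0 (by norm_num : (0:ℝ) < 4)]
    nlinarith
  -- the partition
  set τ : ℕ → ℝ := fun i => (i:ℝ) * c with hτdef
  have hτ0 : τ 0 = 0 := by simp [hτdef]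
  have hτsucc : ∀ i, τ (i+1) = τ i + c := by
    intro i; simp [hτdef]; push_cast; ring
  have hτle : ∀ i, τ i ≤ τ (i+1) := by
    intro i; rw [hτsucc]; linarith
  have hτmono : Monotone τ := by
    apply monotone_nat_of_le_succ hτle
  -- interval integrability of bounded measurable functions
  have hbdd : ∀ (f : ℝ → ℝ), Measurable f → (∀ x, |f x| ≤ 1) →
      ∀ a b : ℝ, IntervalIntegrable f volume a b := by
    intro f hf hbf a b
    constructor <;>
    · apply Measure.integrableOn_of_bounded (M := 1) measure_Ioc_lt_top.ne
        hf.aestronglyMeasurable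
      exact ae_of_all _ fun x => by simpa using hbf x
  have hvbd : ∀ x, |v x| ≤ 1 := by
    intro x; rw [abs_le]; constructor <;> [linarith [(hv x).1]; exact (hv x).2]
  have hvint : ∀ a b : ℝ, IntervalIntegrable v volume a b := hbdd v hvm hvbd
  -- the mass on each subinterval
  set lam : ℕ → ℝ := fun i => ∫ s in (τ i)..(τ (i+1)), v s with hlamdef
  have hlam0 : ∀ i, 0 ≤ lam i := by
    intro i
    apply intervalIntegral.integral_nonneg (hτle i)
    intro x _; exact (hv x).1
  have hlamc : ∀ i, lam i ≤ c := by
    intro i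
    have h1 := intervalIntegral.integral_mono_on (hτle i) (hvint _ _)
      (intervalIntegrable_const (c := (1:ℝ))) (fun x _ => (hv x).2)
    have h2 : (∫ _ in (τ i)..(τ (i+1)), (1:ℝ)) = c := by
      rw [intervalIntegral.integral_const, hτsucc i, smul_eq_mul]; ring
    rw [h2] at h1
    exact h1
  -- the bang-bang control
  set A : Set ℝ := ⋃ i : ℕ, Set.Ioc (τ i) (τ i + lam i) with hAdef
  have hAmeas : MeasurableSet A := MeasurableSet.iUnion fun i => measurableSet_Ioc
  set w : ℝ → ℝ := A.indicator (fun _ => (1:ℝ)) with hwdef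
  have hwmeas : Measurable w := measurable_const.indicator hAmeas
  have hw01 : ∀ s, w s = 0 ∨ w s = 1 := by
    intro s
    by_cases hs : s ∈ A
    · right; simp [hwdef, hs]
    · left; simp [hwdef, hs]
  have hvwbd : ∀ x, |v x - w x| ≤ 1 := by
    intro x
    rcases hw01 x with h0 | h1
    · rw [h0, sub_zero]; exact hvbd x
    · rw [h1, abs_le]
      constructor
      · linarith [(hv x).1]
      · linarith [(hv x).2]
  have hwint : ∀ a b : ℝ, IntervalIntegrable w volume a b := by
    apply hbdd w hwmeas
    intro x; rcases hw01 x with h0 | h0 <;> simp [h0]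
  -- key: the integral of w over each subinterval is lam i
  have hwval : ∀ i, (∫ s in (τ i)..(τ (i+1)), w s) = lam i := by
    intro i
    have hset : A ∩ Set.Ioc (τ i) (τ (i+1)) = Set.Ioc (τ i) (τ i + lam i) := by
      apply Set.Subset.antisymm
      · rintro x ⟨hxA, hxI⟩
        rw [hAdef, Set.mem_iUnion] at hxA
        obtain ⟨j, hj1, hj2⟩ := hxA
        rcases lt_trichotomy j i with hji | hji | hji
        · exfalso
          have h1 : τ j + lam j ≤ τ (j+1) := by have := hlamc j; rw [hτsucc j]; linarith
          have h2 : τ (j+1) ≤ τ i := hτmono hji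
          exact absurd (lt_of_le_of_lt (le_trans hj2 (le_trans h1 h2)) hxI.1)
            (lt_irrefl x)
        · subst hji; exact ⟨hj1, hj2⟩
        · exfalso
          have h2 : τ (i+1) ≤ τ j := hτmono hji
          exact absurd (lt_of_le_of_lt (le_trans hxI.2 h2) hj1) (lt_irrefl x)
      · intro x hx
        refine ⟨Set.mem_iUnion.mpr ⟨i, hx⟩, hx.1, ?_⟩
        have := hlamc i
        rw [hτsucc i]; linarith [hx.2]
    rw [intervalIntegral.integral_of_le (hτle i)]
    rw [hwdef]
    rw [MeasureTheory.integral_indicator hAmeas]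
    rw [MeasureTheory.setIntegral_const]
    rw [measureReal_restrict_apply hAmeas, hset]
    rw [Real.volume_real_Ioc, smul_eq_mul, mul_one,
      max_eq_left (by linarith [hlam0 i])]
    ring
  have hvw0 : ∀ i, (∫ s in (τ i)..(τ (i+1)), (v s - w s)) = 0 := by
    intro i
    rw [intervalIntegral.integral_sub (hvint _ _) (hwint _ _), hwval i]
    simp [hlamdef]
  -- integrability of (v-w) • G for integrable G
  have hvwmeas : Measurable (fun s => v s - w s) := hvm.sub hwmeas
  have hsmul : ∀ (G : ℝ → E), Integrable G volume →
      ∀ a b : ℝ, IntervalIntegrable (fun s => (v s - w s) • G s) volume a b := by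
    intro G hG a b
    have hmem : MemLp (fun s => v s - w s) ⊤ volume := by
      apply memLp_top_of_bound hvwmeas.aestronglyMeasurable 1
      exact ae_of_all _ fun x => by simpa using hvwbd x
    exact (hG.smul_of_top_right hmem).intervalIntegrable
  have hFint : ∀ a b : ℝ, IntervalIntegrable (fun s => (v s - w s) • h s) volume a b :=
    hsmul h hhint
  have hGint : ∀ a b : ℝ,
      IntervalIntegrable (fun s => (v s - w s) • (g₁ s - h s)) volume a b :=
    hsmul _ (hg₁.sub hhint)
  -- per-interval estimate for the h part
  have hEi : ∀ i, ‖∫ s in (τ i)..(τ (i+1)), (v s - w s) • h s‖ ≤ c * η := by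
    intro i
    have hrw : (∫ s in (τ i)..(τ (i+1)), (v s - w s) • h s)
        = (∫ s in (τ i)..(τ (i+1)), (v s - w s) • (h s - h (τ i)))
          + (∫ s in (τ i)..(τ (i+1)), (v s - w s)) • h (τ i) := by
      rw [← intervalIntegral.integral_smul_const]
      rw [← intervalIntegral.integral_add
        (by
          have : (fun s => (v s - w s) • (h s - h (τ i)))
              = fun s => (v s - w s) • h s - (v s - w s) • h (τ i) := by
            funext s; rw [smul_sub]
          rw [this]
          exact (hFint _ _).sub ⟨((hbdd _ hvwmeas hvwbd _ _).1).smul_const _,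
            ((hbdd _ hvwmeas hvwbd _ _).2).smul_const _⟩)
        ⟨((hbdd _ hvwmeas hvwbd _ _).1).smul_const _,
          ((hbdd _ hvwmeas hvwbd _ _).2).smul_const _⟩]
      congr 1; funext s; rw [smul_sub]; abel
    rw [hrw, hvw0 i, zero_smul, add_zero]
    have hb : ∀ x ∈ Set.uIoc (τ i) (τ (i+1)),
        ‖(v x - w x) • (h x - h (τ i))‖ ≤ η := by
      intro x hx
      rw [Set.uIoc_of_le (hτle i)] at hx
      have hdist : dist x (τ i) < δ := by
        rw [Real.dist_eq, abs_of_nonneg (by linarith [hx.1])]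
        have := hx.2; rw [hτsucc i] at this
        linarith
      have hnh : ‖h x - h (τ i)‖ ≤ η := le_of_lt (by
        have := hδ hdist
        rwa [dist_eq_norm] at this)
      rw [norm_smul]
      calc ‖v x - w x‖ * ‖h x - h (τ i)‖ ≤ 1 * η := by
            apply mul_le_mul _ hnh (norm_nonneg _) zero_le_one
            simpa using hvwbd x
        _ = η := one_mul η
    have := intervalIntegral.norm_integral_le_of_norm_le_const hb
    calc ‖∫ s in (τ i)..(τ (i+1)), (v s - w s) • (h s - h (τ i))‖
        ≤ η * |τ (i+1) - τ i| := this
      _ = c * η := by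
          rw [hτsucc i, abs_of_nonneg (by linarith : (0:ℝ) ≤ τ i + c - τ i)]; ring
  refine ⟨w, hwmeas, fun s => by rcases hw01 s with h0 | h0 <;> simp [h0], ?_⟩
  intro t ht
  -- replace g by g₁ on [0,t]
  have hgg₁ : (∫ s in (0:ℝ)..t, (v s - w s) • g s)
      = ∫ s in (0:ℝ)..t, (v s - w s) • g₁ s := by
    apply intervalIntegral.integral_congr
    intro x hx
    rw [Set.uIcc_of_le ht.1] at hx
    have hxIcc : x ∈ Set.Icc (0:ℝ) T := ⟨hx.1, le_trans hx.2 ht.2⟩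
    simp only [hg1def, Set.indicator_of_mem hxIcc]
  rw [hgg₁]
  -- split off the continuous approximation
  have hsplit : (∫ s in (0:ℝ)..t, (v s - w s) • g₁ s)
      = (∫ s in (0:ℝ)..t, (v s - w s) • (g₁ s - h s))
        + ∫ s in (0:ℝ)..t, (v s - w s) • h s := by
    rw [← intervalIntegral.integral_add (hGint _ _) (hFint _ _)]
    congr 1; funext s; rw [smul_sub]; abel
  rw [hsplit]
  -- bound the error term
  have hbd1 : ‖∫ s in (0:ℝ)..t, (v s - w s) • (g₁ s - h s)‖ ≤ ε/4 := by
    calc ‖∫ s in (0:ℝ)..t, (v s - w s) • (g₁ s - h s)‖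
        ≤ ∫ s in (0:ℝ)..t, ‖(v s - w s) • (g₁ s - h s)‖ :=
          intervalIntegral.norm_integral_le_integral_norm ht.1
      _ ≤ ∫ s in (0:ℝ)..t, ‖g₁ s - h s‖ := by
          apply intervalIntegral.integral_mono_on ht.1 (hGint _ _).norm
            (hg₁.sub hhint).norm.intervalIntegrable
          intro x _
          rw [norm_smul]
          calc ‖v x - w x‖ * ‖g₁ x - h x‖ ≤ 1 * ‖g₁ x - h x‖ := by
                apply mul_le_mul_of_nonneg_right _ (norm_nonneg _)
                simpa using hvwbd x
            _ = ‖g₁ x - h x‖ := one_mul _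
      _ ≤ ∫ s, ‖g₁ s - h s‖ := by
          rw [intervalIntegral.integral_of_le ht.1]
          apply setIntegral_le_integral (hg₁.sub hhint).norm
          exact ae_of_all _ fun x => norm_nonneg _
      _ ≤ ε/4 := hhdist
  -- bound the main term
  set j : ℕ := Nat.floor (t / c) with hjdef
  have hjt : τ j ≤ t := by
    have := Nat.floor_le (div_nonneg ht.1 hc.le)
    rw [hτdef]
    calc (j:ℝ) * c ≤ (t/c) * c := mul_le_mul_of_nonneg_right this hc.le
      _ = t := div_mul_cancel₀ t hc.ne'
  have htj1 : t < τ (j+1) := by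
    have := Nat.lt_floor_add_one (t / c)
    rw [hτdef]
    push_cast
    calc t = (t/c) * c := (div_mul_cancel₀ t hc.ne').symm
      _ < ((j:ℝ)+1) * c := by apply mul_lt_mul_of_pos_right _ hc; exact_mod_cast this
  have hdecomp : (∫ s in (0:ℝ)..t, (v s - w s) • h s)
      = (∑ i ∈ Finset.range j, ∫ s in (τ i)..(τ (i+1)), (v s - w s) • h s)
        + ∫ s in (τ j)..t, (v s - w s) • h s := by
    rw [intervalIntegral.sum_integral_adjacent_intervals (fun k _ => hFint _ _)]
    rw [hτ0]
    exact (intervalIntegral.integral_add_adjacent_intervals (hFint _ _) (hFint _ _)).symm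
  have hbd2 : ‖∫ s in (0:ℝ)..t, (v s - w s) • h s‖ ≤ ε/4 + ε/4 := by
    rw [hdecomp]
    have hsum : ‖∑ i ∈ Finset.range j, ∫ s in (τ i)..(τ (i+1)), (v s - w s) • h s‖
        ≤ ε/4 := by
      calc ‖∑ i ∈ Finset.range j, ∫ s in (τ i)..(τ (i+1)), (v s - w s) • h s‖
          ≤ ∑ i ∈ Finset.range j, ‖∫ s in (τ i)..(τ (i+1)), (v s - w s) • h s‖ :=
            norm_sum_le _ _
        _ ≤ ∑ _i ∈ Finset.range j, c * η := Finset.sum_le_sum fun i _ => hEi i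
        _ = (j:ℝ) * (c * η) := by rw [Finset.sum_const, Finset.card_range, nsmul_eq_mul]
        _ = τ j * η := by rw [hτdef]; ring
        _ ≤ T * η := by
            apply mul_le_mul_of_nonneg_right _ hη0.le
            exact le_trans hjt ht.2
        _ ≤ ε/4 := by
            rw [hηdef]
            rw [← mul_div_assoc]
            rw [div_le_div_iff₀ (by nlinarith : (0:ℝ) < 4*(T+1)) (by norm_num : (0:ℝ) < 4)]
            nlinarith
    have hlast : ‖∫ s in (τ j)..t, (v s - w s) • h s‖ ≤ ε/4 := by
      have hb : ∀ x ∈ Set.uIoc (τ j) t, ‖(v x - w x) • h x‖ ≤ M := by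
        intro x _
        rw [norm_smul]
        calc ‖v x - w x‖ * ‖h x‖ ≤ 1 * M := by
              apply mul_le_mul _ (hM x) (norm_nonneg _) zero_le_one
              simpa using hvwbd x
          _ = M := one_mul M
      have := intervalIntegral.norm_integral_le_of_norm_le_const hb
      calc ‖∫ s in (τ j)..t, (v s - w s) • h s‖ ≤ M * |t - τ j| := this
        _ ≤ M * c := by
            apply mul_le_mul_of_nonneg_left _ hM0
            rw [abs_of_nonneg (by linarith)]
            have := hτsucc j
            linarith
        _ ≤ ε/4 := hcM
    calc ‖(∑ i ∈ Finset.range j, ∫ s in (τ i)..(τ (i+1)), (v s - w s) • h s)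
          + ∫ s in (τ j)..t, (v s - w s) • h s‖
        ≤ ‖∑ i ∈ Finset.range j, ∫ s in (τ i)..(τ (i+1)), (v s - w s) • h s‖
          + ‖∫ s in (τ j)..t, (v s - w s) • h s‖ := norm_add_le _ _
      _ ≤ ε/4 + ε/4 := add_le_add hsum hlast
  calc ‖(∫ s in (0:ℝ)..t, (v s - w s) • (g₁ s - h s))
        + ∫ s in (0:ℝ)..t, (v s - w s) • h s‖
      ≤ ‖∫ s in (0:ℝ)..t, (v s - w s) • (g₁ s - h s)‖
        + ‖∫ s in (0:ℝ)..t, (v s - w s) • h s‖ := norm_add_le _ _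
    _ ≤ ε/4 + (ε/4 + ε/4) := add_le_add hbd1 hbd2
    _ ≤ ε := by linarith
end

section
/- Let E be a real Banach space, L ≥ 0, T > 0, x₀ ∈ E, and let f₀, f₁ : ℝ → E → E be such that for each t, both f₀ t and f₁ t are Lipschitz with constant L. Let v, w : ℝ → ℝ take values in [0, 1], and let x, y : ℝ → E be continuous on [0, T] and satisfy, for all t ∈ [0, T], the integral equations x t = x₀ + ∫_0^t ((1 − v s) • f₀ s (x s) + v s • f₁ s (x s)) ds and y t = x₀ + ∫_0^t ((1 − w s) • f₀ s (y s) + w s • f₁ s (y s)) ds, where all integrands are Bochner integrable on [0, T]. Suppose δ ≥ 0 satisfies ‖∫_0^t (w s − v s) • (f₁ s (x s) − f₀ s (x s)) ds‖ ≤ δ for all t ∈ [0, T]. Then for all t ∈ [0, T], ‖y t − x t‖ ≤ δ * exp (L * t). -/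
open MeasureTheory Set intervalIntegral Real

/-- Grönwall-type estimate: a switched trajectory `y` driven by a bang-bang
control `w` approximating the relaxed control `v` (in the sense of running
integrals bounded by `δ`) stays within `δ · e^{L t}` of the embedded trajectory
`x`. -/
theorem stmt8 {E : Type*} [NormedAddCommGroup E] [NormedSpace ℝ E] [CompleteSpace E]
    (L : ℝ) (hL : 0 ≤ L) (T : ℝ) (hT : 0 < T) (x₀ : E)
    (f₀ f₁ : ℝ → E → E)
    (hf₀ : ∀ t, LipschitzWith L.toNNReal (f₀ t))
    (hf₁ : ∀ t, LipschitzWith L.toNNReal (f₁ t))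
    (v w : ℝ → ℝ)
    (hv : ∀ t, v t ∈ Set.Icc (0 : ℝ) 1) (hw : ∀ t, w t ∈ Set.Icc (0 : ℝ) 1)
    (x y : ℝ → E)
    (hxc : ContinuousOn x (Set.Icc 0 T)) (hyc : ContinuousOn y (Set.Icc 0 T))
    (hxint : IntegrableOn (fun s => (1 - v s) • f₀ s (x s) + v s • f₁ s (x s))
      (Set.Icc 0 T))
    (hyint : IntegrableOn (fun s => (1 - w s) • f₀ s (y s) + w s • f₁ s (y s))
      (Set.Icc 0 T))
    (hzint : IntegrableOn (fun s => (w s - v s) • (f₁ s (x s) - f₀ s (x s)))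
      (Set.Icc 0 T))
    (hx : ∀ t ∈ Set.Icc (0 : ℝ) T,
      x t = x₀ + ∫ s in (0 : ℝ)..t, ((1 - v s) • f₀ s (x s) + v s • f₁ s (x s)))
    (hy : ∀ t ∈ Set.Icc (0 : ℝ) T,
      y t = x₀ + ∫ s in (0 : ℝ)..t, ((1 - w s) • f₀ s (y s) + w s • f₁ s (y s)))
    (δ : ℝ) (hδ : 0 ≤ δ)
    (hclose : ∀ t ∈ Set.Icc (0 : ℝ) T,
      ‖∫ s in (0 : ℝ)..t, (w s - v s) • (f₁ s (x s) - f₀ s (x s))‖ ≤ δ) :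
    ∀ t ∈ Set.Icc (0 : ℝ) T, ‖y t - x t‖ ≤ δ * Real.exp (L * t) := by
  set g : ℝ → ℝ := fun s => L * ‖y s - x s‖ with hgdef
  have hgnn : ∀ s, 0 ≤ g s := fun s => mul_nonneg hL (norm_nonneg _)
  have hgc : ContinuousOn g (Icc 0 T) := continuousOn_const.mul ((hyc.sub hxc).norm)
  have hgint : IntegrableOn g (Icc 0 T) := hgc.integrableOn_compact isCompact_Icc
  set A : ℝ → E := fun s =>
    (1 - w s) • (f₀ s (y s) - f₀ s (x s)) + (w s) • (f₁ s (y s) - f₁ s (x s)) with hAdef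
  have hAeq : ∀ s, ((1 - w s) • f₀ s (y s) + w s • f₁ s (y s))
      - ((1 - v s) • f₀ s (x s) + v s • f₁ s (x s))
      = A s + (w s - v s) • (f₁ s (x s) - f₀ s (x s)) := by
    intro s
    simp only [hAdef, smul_sub, sub_smul, one_smul]
    abel
  have hAint : IntegrableOn A (Icc 0 T) := by
    refine ((hyint.sub hxint).sub hzint).congr
      (Filter.EventuallyEq.of_eq (funext fun s => ?_))
    simp only [Pi.sub_apply]
    rw [hAeq s]; abel
  -- pointwise bound on A
  have hAbound : ∀ s, ‖A s‖ ≤ g s := by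
    intro s
    have h0 : ‖f₀ s (y s) - f₀ s (x s)‖ ≤ L * ‖y s - x s‖ := by
      have := (hf₀ s).dist_le_mul (y s) (x s)
      rwa [dist_eq_norm, dist_eq_norm, Real.coe_toNNReal L hL] at this
    have h1 : ‖f₁ s (y s) - f₁ s (x s)‖ ≤ L * ‖y s - x s‖ := by
      have := (hf₁ s).dist_le_mul (y s) (x s)
      rwa [dist_eq_norm, dist_eq_norm, Real.coe_toNNReal L hL] at this
    have hw0 := (hw s).1
    have hw1 := (hw s).2
    calc ‖A s‖ ≤ ‖(1 - w s) • (f₀ s (y s) - f₀ s (x s))‖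
        + ‖(w s) • (f₁ s (y s) - f₁ s (x s))‖ := norm_add_le _ _
      _ = (1 - w s) * ‖f₀ s (y s) - f₀ s (x s)‖ + w s * ‖f₁ s (y s) - f₁ s (x s)‖ := by
          rw [norm_smul, norm_smul, Real.norm_of_nonneg (by linarith),
            Real.norm_of_nonneg hw0]
      _ ≤ (1 - w s) * (L * ‖y s - x s‖) + w s * (L * ‖y s - x s‖) := by
          gcongr <;> linarith
      _ = g s := by simp [hgdef]; ring
  set φ : ℝ → ℝ := fun t => δ + ∫ s in (0:ℝ)..t, g s with hφdef
  -- Step 1: integral inequality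
  have step1 : ∀ t ∈ Icc (0:ℝ) T, ‖y t - x t‖ ≤ φ t := by
    intro t ht
    obtain ⟨ht0, htT⟩ := ht
    have hsub : Icc (0:ℝ) t ⊆ Icc 0 T := Icc_subset_Icc le_rfl htT
    have iFx : IntervalIntegrable (fun s => (1 - v s) • f₀ s (x s) + v s • f₁ s (x s))
        volume 0 t := by
      rw [intervalIntegrable_iff_integrableOn_Icc_of_le ht0]
      exact hxint.mono_set hsub
    have iFy : IntervalIntegrable (fun s => (1 - w s) • f₀ s (y s) + w s • f₁ s (y s))
        volume 0 t := by
      rw [intervalIntegrable_iff_integrableOn_Icc_of_le ht0]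
      exact hyint.mono_set hsub
    have iB : IntervalIntegrable (fun s => (w s - v s) • (f₁ s (x s) - f₀ s (x s)))
        volume 0 t := by
      rw [intervalIntegrable_iff_integrableOn_Icc_of_le ht0]
      exact hzint.mono_set hsub
    have iA : IntervalIntegrable A volume 0 t := by
      rw [intervalIntegrable_iff_integrableOn_Icc_of_le ht0]
      exact hAint.mono_set hsub
    have iG : IntervalIntegrable g volume 0 t := by
      rw [intervalIntegrable_iff_integrableOn_Icc_of_le ht0]
      exact hgint.mono_set hsub
    have key : y t - x t = (∫ s in (0:ℝ)..t, A s)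
        + ∫ s in (0:ℝ)..t, (w s - v s) • (f₁ s (x s) - f₀ s (x s)) := by
      rw [hy t ⟨ht0, htT⟩, hx t ⟨ht0, htT⟩, add_sub_add_left_eq_sub,
        ← intervalIntegral.integral_sub iFy iFx, ← intervalIntegral.integral_add iA iB]
      exact intervalIntegral.integral_congr fun s _ => hAeq s
    have hnA : ‖∫ s in (0:ℝ)..t, A s‖ ≤ ∫ s in (0:ℝ)..t, g s := by
      have := intervalIntegral.norm_integral_le_of_norm_le
        (f := A) (g := g) (μ := volume) (a := 0) (b := t)
        ht0 (Filter.Eventually.of_forall fun s _ => hAbound s) iG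
      exact this
    calc ‖y t - x t‖ ≤ ‖∫ s in (0:ℝ)..t, A s‖
        + ‖∫ s in (0:ℝ)..t, (w s - v s) • (f₁ s (x s) - f₀ s (x s))‖ := by
          rw [key]; exact norm_add_le _ _
      _ ≤ (∫ s in (0:ℝ)..t, g s) + δ := add_le_add hnA (hclose t ⟨ht0, htT⟩)
      _ = φ t := by rw [hφdef]; ring
  -- Step 2: Gronwall
  have hφc : ContinuousOn φ (Icc 0 T) := by
    apply continuousOn_const.add
    have := intervalIntegral.continuousOn_primitive_interval
      (a := 0) (b := T) (f := g) (μ := volume) (by rwa [uIcc_of_le hT.le])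
    rwa [uIcc_of_le hT.le] at this
  have hφ' : ∀ t ∈ Ico (0:ℝ) T, HasDerivWithinAt φ (g t) (Ici t) t := by
    intro t ht
    have hmem : Icc (0:ℝ) T ∈ nhdsWithin t (Ici t) := by
      refine mem_nhdsWithin.mpr ⟨Iio T, isOpen_Iio, ht.2, ?_⟩
      rintro s ⟨hs1, hs2⟩
      exact ⟨le_trans ht.1 hs2, le_of_lt hs1⟩
    have hmem' : Icc (0:ℝ) T ∈ nhdsWithin t (Ioi t) :=
      nhdsWithin_mono t Ioi_subset_Ici_self hmem
    have iG : IntervalIntegrable g volume 0 t := by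
      rw [intervalIntegrable_iff_integrableOn_Icc_of_le ht.1]
      exact hgint.mono_set (Icc_subset_Icc le_rfl ht.2.le)
    have hmeas : StronglyMeasurableAtFilter g (nhdsWithin t (Ioi t)) volume :=
      ⟨Icc 0 T, hmem', hgc.aestronglyMeasurable measurableSet_Icc⟩
    have hcw : ContinuousWithinAt g (Ioi t) t :=
      (hgc t ⟨ht.1, ht.2.le⟩).mono_of_mem_nhdsWithin hmem'
    exact (intervalIntegral.integral_hasDerivWithinAt_right iG hmeas hcw).const_add δ
  have hφ0 : ‖φ 0‖ ≤ δ := by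
    simp [hφdef, abs_of_nonneg hδ]
  have hbound : ∀ t ∈ Ico (0:ℝ) T, ‖g t‖ ≤ L * ‖φ t‖ + 0 := by
    intro t ht
    have h1 := step1 t ⟨ht.1, ht.2.le⟩
    have hφnn : 0 ≤ φ t := le_trans (norm_nonneg _) h1
    rw [Real.norm_of_nonneg (hgnn t), Real.norm_of_nonneg hφnn, add_zero, hgdef]
    exact mul_le_mul_of_nonneg_left h1 hL
  have hG := norm_le_gronwallBound_of_norm_deriv_right_le hφc hφ' hφ0 hbound
  intro t ht
  have := hG t ht
  rw [sub_zero, gronwallBound_ε0] at this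
  exact le_trans (step1 t ht) (le_trans (le_abs_self _) this)
end
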